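/- For every non-negative integer k, there exists a connected graph G with a vertex v such that γ_g(G−v) − γ_g(G) = k; in particular the difference γ_g(G−v) − γ_g(G) cannot be bounded above. -/
import Mathlib


open Classical

noncomputable section

namespace DomGame

variable {V : Type*} [Fintype V]

/-- Closed neighborhood of `v` as a `Finset`. -/
noncomputable def N (G : SimpleGraph V) (v : V) : Finset V :=
  Finset.univ.filter (fun u => G.Adj v u ∨ u = v)

/-- Legal moves given the set `S` of already dominated vertices. -/
noncomputable def moves (G : SimpleGraph V) (S : Finset V) : Finset V :=
  Finset.univ.filter (fun v => ¬ N G v ⊆ S)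

lemma card_lt {G : SimpleGraph V} {S : Finset V} (v : V) (hv : v ∈ moves G S) :
    (Finset.univ \ (S ∪ N G v)).card < (Finset.univ \ S).card := by
  simp only [moves, Finset.mem_filter] at hv
  obtain ⟨u, hu, hus⟩ := Finset.not_subset.mp hv.2
  apply Finset.card_lt_card
  refine ⟨Finset.sdiff_subset_sdiff (le_refl _) Finset.subset_union_left, ?_⟩
  intro hsub
  have := hsub (Finset.mem_sdiff.mpr ⟨Finset.mem_univ u, hus⟩)
  rw [Finset.mem_sdiff, Finset.mem_union] at this
  exact this.2 (Or.inr hu)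

mutual
/-- Number of moves with optimal play when it is Dominator's turn and
`S` is the set of already dominated vertices. -/
noncomputable def gameD (G : SimpleGraph V) (S : Finset V) : ℕ :=
  if h : (moves G S).Nonempty then
    1 + (moves G S).attach.inf' (by simpa using h)
      (fun v => gameS G (S ∪ N G v.1))
  else 0
termination_by (Finset.univ \ S).card
decreasing_by exact card_lt v.1 v.2

/-- Number of moves with optimal play when it is Staller's turn. -/
noncomputable def gameS (G : SimpleGraph V) (S : Finset V) : ℕ :=
  if h : (moves G S).Nonempty then
    1 + (moves G S).attach.sup' (by simpa using h)
      (fun v => gameD G (S ∪ N G v.1))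
  else 0
termination_by (Finset.univ \ S).card
decreasing_by exact card_lt v.1 v.2
end

/-- The (Dominator-start) game domination number. -/
noncomputable def gammaG (G : SimpleGraph V) : ℕ := gameD G ∅

/-- The Staller-start game domination number. -/
noncomputable def gammaG' (G : SimpleGraph V) : ℕ := gameS G ∅

lemma N_bot (v : V) : N (⊥ : SimpleGraph V) v = {v} := by
  ext u; simp [N, eq_comm]

lemma moves_bot (S : Finset V) : moves (⊥ : SimpleGraph V) S = Finset.univ \ S := by
  ext v; simp [moves, N_bot, Finset.singleton_subset_iff]

lemma game_bot : ∀ (n : ℕ) (S : Finset V), (Finset.univ \ S).card = n →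
    gameD (⊥ : SimpleGraph V) S = n ∧ gameS (⊥ : SimpleGraph V) S = n := by
  intro n
  induction n using Nat.strong_induction_on with
  | _ n ih =>
    intro S hS
    by_cases h : (moves (⊥ : SimpleGraph V) S).Nonempty
    · have hn : 0 < n := by
        rw [← hS]
        rw [moves_bot] at h
        exact Finset.card_pos.mpr h
      have key : ∀ v ∈ moves (⊥ : SimpleGraph V) S,
          (Finset.univ \ (S ∪ N (⊥ : SimpleGraph V) v)).card = n - 1 := by
        intro v hv
        rw [moves_bot, Finset.mem_sdiff] at hv
        rw [N_bot]
        have : Finset.univ \ (S ∪ {v}) = (Finset.univ \ S).erase v := by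
          ext u; simp [Finset.mem_sdiff, Finset.mem_erase, and_comm, or_comm, not_or, and_assoc]
        rw [this, Finset.card_erase_of_mem (by simp [hv.2]), hS]
      have ihv : ∀ v ∈ moves (⊥ : SimpleGraph V) S,
          gameS (⊥ : SimpleGraph V) (S ∪ N ⊥ v) = n - 1 ∧
          gameD (⊥ : SimpleGraph V) (S ∪ N ⊥ v) = n - 1 := by
        intro v hv
        have := ih (n-1) (by omega) (S ∪ N ⊥ v) (key v hv)
        exact ⟨this.2, this.1⟩
      constructor
      · rw [gameD, dif_pos h]
        have : ((moves (⊥ : SimpleGraph V) S).attach.inf' (by simpa using h)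
            (fun v => gameS (⊥ : SimpleGraph V) (S ∪ N ⊥ v.1))) = n - 1 := by
          rw [Finset.inf'_congr (g := fun _ => n - 1) _ rfl
            (fun v _ => (ihv v.1 v.2).1), Finset.inf'_const]
        omega
      · rw [gameS, dif_pos h]
        have : ((moves (⊥ : SimpleGraph V) S).attach.sup' (by simpa using h)
            (fun v => gameD (⊥ : SimpleGraph V) (S ∪ N ⊥ v.1))) = n - 1 := by
          rw [Finset.sup'_congr (g := fun _ => n - 1) _ rfl
            (fun v _ => (ihv v.1 v.2).2), Finset.sup'_const]
        omega
    · have hn : n = 0 := by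
        rw [← hS]
        rw [moves_bot, Finset.not_nonempty_iff_eq_empty] at h
        simp [h]
      rw [gameD, dif_neg h, gameS, dif_neg h]
      omega

lemma gammaG_bot : gammaG (⊥ : SimpleGraph V) = Fintype.card V := by
  have := game_bot (V := V) (Fintype.card V) ∅ (by simp)
  simpa [gammaG] using this.1

end DomGame

open Classical DomGame
noncomputable section

def starG (k : ℕ) : SimpleGraph (Fin (k+2)) :=
  SimpleGraph.fromRel (fun a _ => a = 0)

lemma starG_adj (k : ℕ) (a b : Fin (k+2)) :
    (starG k).Adj a b ↔ a ≠ b ∧ (a = 0 ∨ b = 0) := by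
  simp [starG, SimpleGraph.fromRel_adj]

lemma N_starG_zero (k : ℕ) : N (starG k) 0 = Finset.univ := by
  ext u
  simp only [N, Finset.mem_filter, Finset.mem_univ, true_and, starG_adj, iff_true]
  by_cases h : u = 0
  · exact Or.inr h
  · exact Or.inl ⟨fun hh => h hh.symm, by left; trivial⟩

lemma starG_connected (k : ℕ) : (starG k).Connected := by
  rw [SimpleGraph.connected_iff]
  refine ⟨?_, ⟨0⟩⟩
  have h0 : ∀ a : Fin (k+2), (starG k).Reachable 0 a := by
    intro a
    by_cases h : a = 0
    · subst h; rfl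
    · exact ((starG_adj k 0 a).mpr ⟨fun hh => h hh.symm, Or.inl rfl⟩).reachable
  intro a b
  exact (h0 a).symm.trans (h0 b)

lemma gammaG_starG (k : ℕ) : gammaG (starG k) = 1 := by
  have h0 : (0 : Fin (k+2)) ∈ moves (starG k) ∅ := by
    simp only [moves, Finset.mem_filter, Finset.mem_univ, true_and, N_starG_zero]
    intro hsub
    exact absurd (hsub (Finset.mem_univ 0)) (by simp)
  have h : (moves (starG k) ∅).Nonempty := ⟨0, h0⟩
  rw [gammaG, gameD, dif_pos h]
  have huniv : (∅ : Finset (Fin (k+2))) ∪ N (starG k) 0 = Finset.univ := by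
    rw [N_starG_zero]; simp
  have hend : gameS (starG k) (∅ ∪ N (starG k) 0) = 0 := by
    rw [huniv, gameS, dif_neg]
    rw [Finset.not_nonempty_iff_eq_empty]
    ext v
    simp [moves, Finset.subset_univ]
  have goal' : ∀ x : ℕ, x ≤ 0 → 1 + x = 1 := by omega
  apply goal'
  exact le_trans
    (Finset.inf'_le _ (Finset.mem_attach _ (⟨0, h0⟩ : {x // x ∈ moves (starG k) ∅})))
    (le_of_eq hend)

lemma induce_starG (k : ℕ) :
    (starG k).induce ({(0 : Fin (k+2))}ᶜ : Set (Fin (k+2))) = ⊥ := by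
  ext ⟨a, ha⟩ ⟨b, hb⟩
  simp only [SimpleGraph.comap_adj, SimpleGraph.bot_adj, iff_false, Function.Embedding.coe_subtype]
  rw [starG_adj]
  rintro ⟨-, h | h⟩
  · exact ha h
  · exact hb h


open DomGame in
/-- For every `k`, there is a connected graph `G` and a vertex `v` with
`γ_g(G−v) − γ_g(G) = k`; in particular the difference is unbounded above. -/
theorem vertex_removal_unbounded (k : ℕ) :
    ∃ (n : ℕ) (G : SimpleGraph (Fin n)) (v : Fin n),
      G.Connected ∧ (gammaG (G.induce {v}ᶜ) : ℤ) - gammaG G = k := by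
  refine ⟨k+2, starG k, 0, starG_connected k, ?_⟩
  rw [induce_starG, gammaG_starG, gammaG_bot]
  have : Fintype.card ({(0 : Fin (k+2))}ᶜ : Set (Fin (k+2))) = k + 1 := by
    rw [Fintype.card_compl_set, Set.card_singleton, Fintype.card_fin]
    omega
  rw [this]
  push_cast
  ring
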